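/- Let x_1,...,x_h be the crossing vertices of two opposite non-conflicting shortest paths P_i and P_j (in a plane graph with positive edge lengths, endpoints on the outer face). Then the order of x_1,...,x_h along P_i is exactly the reverse of their order along P_j. -/

import Mathlib

variable {V : Type*}

/-- The arcs (consecutive vertex pairs) of a directed walk, represented as a list of vertices. -/
def arcs (P : List V) : List (V × V) := P.zip P.tail

/-- The directed walk `P` uses the arc `uv`. -/
def UsesArc (P : List V) (u v : V) : Prop := (u, v) ∈ arcs P

/-- The directed walk `P` uses the undirected edge `{u,v}` (in either direction). -/
def UsesEdge (P : List V) (u v : V) : Prop := UsesArc P u v ∨ UsesArc P v u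

/-- Two directed walks conflict if some edge `{u,v}` is traversed as `uv` by one
and as `vu` by the other. -/
def Conflict (P Q : List V) : Prop := ∃ u v, UsesArc P u v ∧ UsesArc Q v u

/-- Two directed walks are edge-disjoint if no undirected edge is used by both
(in either direction). -/
def EdgeDisjointW (P Q : List V) : Prop := ∀ u v, ¬ (UsesEdge P u v ∧ UsesEdge Q u v)

/-- `x` strictly precedes `y` on the walk `P`. -/
def Prec (P : List V) (x y : V) : Prop :=
  ∃ i j : ℕ, i < j ∧ P[i]? = some x ∧ P[j]? = some y

/-- `P` is a directed walk in `G` from `s` to `t`. -/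
def IsWalkFrom (G : SimpleGraph V) (P : List V) (s t : V) : Prop :=
  P.Chain' G.Adj ∧ P.head? = some s ∧ P.getLast? = some t

/-- Length of a walk with respect to edge lengths `ℓ`. -/
noncomputable def wlen (ℓ : V → V → ℝ) (P : List V) : ℝ :=
  ((arcs P).map fun p => ℓ p.1 p.2).sum

/-- `P` is a shortest walk in `G` from `s` to `t`. -/
def IsShortest (G : SimpleGraph V) (ℓ : V → V → ℝ) (P : List V) (s t : V) : Prop :=
  IsWalkFrom G P s t ∧ ∀ Q, IsWalkFrom G Q s t → wlen ℓ P ≤ wlen ℓ Q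

/-- Edge lengths are positive (on edges) and symmetric. -/
def PosLengths (G : SimpleGraph V) (ℓ : V → V → ℝ) : Prop :=
  (∀ u v, G.Adj u v → 0 < ℓ u v) ∧ ∀ u v, ℓ u v = ℓ v u

/-- Four points appear in this cyclic order around the outer face. -/
def CyclicOrder4 [CircularOrder V] (a b c d : V) : Prop :=
  sbtw a b c ∧ sbtw b c d ∧ sbtw c d a

section Aux

variable {ℓ : V → V → ℝ} {G : SimpleGraph V}

@[simp] lemma wlen_nil : wlen ℓ ([] : List V) = 0 := by simp [wlen, arcs]
@[simp] lemma wlen_single (a : V) : wlen ℓ [a] = 0 := by simp [wlen, arcs]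
@[simp] lemma wlen_cons₂ (a b : V) (l : List V) :
    wlen ℓ (a :: b :: l) = ℓ a b + wlen ℓ (b :: l) := by
  simp [wlen, arcs]

lemma wlen_append (l₁ : List V) (u : V) (l₂ : List V) :
    wlen ℓ (l₁ ++ u :: l₂) = wlen ℓ (l₁ ++ [u]) + wlen ℓ (u :: l₂) := by
  induction l₁ with
  | nil => simp
  | cons a l ih =>
    cases l with
    | nil => simp
    | cons b l' => simp only [List.cons_append, wlen_cons₂] at *; rw [ih]; ring

lemma wlen_nonneg (hpos : ∀ u v, G.Adj u v → 0 < ℓ u v) :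
    ∀ {l : List V}, l.Chain' G.Adj → 0 ≤ wlen ℓ l := by
  intro l
  induction l with
  | nil => simp
  | cons a l ih =>
    cases l with
    | nil => simp
    | cons b l' =>
      intro hc
      rw [List.Chain', List.isChain_cons_cons] at hc
      have := hpos a b hc.1
      have := ih hc.2
      rw [wlen_cons₂]; linarith

lemma wlen_pos (hpos : ∀ u v, G.Adj u v → 0 < ℓ u v) {a b : V} {l : List V}
    (hc : (a :: b :: l).Chain' G.Adj) : 0 < wlen ℓ (a :: b :: l) := by
  rw [List.Chain', List.isChain_cons_cons] at hc
  have := hpos a b hc.1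
  have := wlen_nonneg hpos hc.2
  rw [wlen_cons₂]; linarith

lemma wlen_pos' (hpos : ∀ u v, G.Adj u v → 0 < ℓ u v) {u v : V} {M : List V}
    (hc : (u :: (M ++ [v])).Chain' G.Adj) : 0 < wlen ℓ (u :: (M ++ [v])) := by
  cases M with
  | nil => exact wlen_pos hpos hc
  | cons m M' => exact wlen_pos hpos hc

lemma wlen_reverse (hsym : ∀ u v, ℓ u v = ℓ v u) :
    ∀ (l : List V), wlen ℓ l.reverse = wlen ℓ l := by
  intro l
  induction l with
  | nil => simp
  | cons u l ih =>
    cases l with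
    | nil => simp
    | cons v l' =>
      have key : ∀ (l₀ : List V) (w z : V), wlen ℓ ((l₀ ++ [w]) ++ [z])
          = wlen ℓ (l₀ ++ [w]) + ℓ w z := by
        intro l₀ w z
        have := wlen_append (ℓ := ℓ) l₀ w [z]
        simpa using this
      have h1 : (u :: v :: l').reverse = ((v :: l').reverse) ++ [u] := by simp
      have h2 : (v :: l').reverse = l'.reverse ++ [v] := by simp
      rw [h1, h2, key l'.reverse v u, ← h2, ih, wlen_cons₂, hsym v u]; ring

lemma split_eq {P : List V} {k : ℕ} {v : V} (h : P[k]? = some v) :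
    P = P.take k ++ v :: P.drop (k + 1) := by
  rw [List.getElem?_eq_some_iff] at h
  obtain ⟨hk, hv⟩ := h
  conv_lhs => rw [← List.take_append_drop k P]
  rw [List.drop_eq_getElem_cons hk, hv]

lemma decomp2 {P : List V} {i j : ℕ} {x y : V} (hij : i < j)
    (hi : P[i]? = some x) (hj : P[j]? = some y) :
    ∃ A B C : List V, P = A ++ x :: (B ++ y :: C) := by
  have e1 := split_eq hi
  set T := P.drop (i + 1) with hT
  have hjT : T[j - i - 1]? = some y := by
    rw [hT, List.getElem?_drop]
    have : i + 1 + (j - i - 1) = j := by omega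
    rw [this]; exact hj
  have e2 := split_eq hjT
  exact ⟨P.take i, T.take (j - i - 1), T.drop (j - i - 1 + 1), by conv_lhs => rw [e1, e2]⟩

lemma decomp3 {P : List V} {i j k : ℕ} {x y z : V} (hij : i < j) (hjk : j < k)
    (hi : P[i]? = some x) (hj : P[j]? = some y) (hk : P[k]? = some z) :
    ∃ A B C D : List V, P = A ++ x :: (B ++ y :: (C ++ z :: D)) := by
  have e1 := split_eq hi
  set T := P.drop (i + 1) with hT
  have hjT : T[j - i - 1]? = some y := by
    rw [hT, List.getElem?_drop]
    have : i + 1 + (j - i - 1) = j := by omega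
    rw [this]; exact hj
  have hkT : T[k - i - 1]? = some z := by
    rw [hT, List.getElem?_drop]
    have : i + 1 + (k - i - 1) = k := by omega
    rw [this]; exact hk
  have e2 := split_eq hjT
  set U := T.drop (j - i - 1 + 1) with hU
  have hkU : U[k - j - 1]? = some z := by
    rw [hU, List.getElem?_drop]
    have : j - i - 1 + 1 + (k - j - 1) = k - i - 1 := by omega
    rw [this]; exact hkT
  have e3 := split_eq hkU
  refine ⟨P.take i, T.take (j - i - 1), U.take (k - j - 1), U.drop (k - j - 1 + 1), ?_⟩
  conv_lhs => rw [e1, e2, e3]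

lemma exists_concat_of_getLast? {R : List V} {v : V} (h : R.getLast? = some v) :
    ∃ R₀ : List V, R = R₀ ++ [v] := by
  cases R with
  | nil => simp at h
  | cons a l =>
    refine ⟨(a :: l).dropLast, ?_⟩
    have hne : (a :: l) ≠ [] := by simp
    rw [List.getLast?_eq_getLast hne, Option.some.injEq] at h
    conv_lhs => rw [← List.dropLast_append_getLast hne]
    rw [h]

lemma seg_shortest {s t : V} (A : List V) (u : V) (B : List V) (v : V) (C : List V)
    (hP : IsShortest G ℓ (A ++ u :: (B ++ v :: C)) s t) :
    IsShortest G ℓ (u :: (B ++ [v])) u v := by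
  obtain ⟨⟨hchain, hhead, hlast⟩, hmin⟩ := hP
  rw [List.Chain', List.isChain_append] at hchain
  obtain ⟨hcA, hcM, hjA⟩ := hchain
  have hcM' : ((u :: B) ++ v :: C).Chain' G.Adj := by simpa [List.Chain'] using hcM
  rw [List.Chain', List.isChain_append] at hcM'
  obtain ⟨hcuB, hcvC, hjB⟩ := hcM'
  constructor
  · refine ⟨?_, rfl, ?_⟩
    · have : (u :: (B ++ [v])) = (u :: B) ++ [v] := by simp
      rw [this, List.Chain', List.isChain_append]
      exact ⟨hcuB, List.isChain_singleton v, by simpa using hjB⟩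
    · have : (u :: (B ++ [v])) = (u :: B) ++ [v] := by simp
      rw [this, List.getLast?_concat]
  · intro R ⟨hRc, hRh, hRl⟩
    obtain ⟨R₁, rfl⟩ : ∃ R₁, R = u :: R₁ := by
      cases R with
      | nil => simp at hRh
      | cons a l => simp at hRh; exact ⟨l, by rw [hRh]⟩
    obtain ⟨R₀, hR₀⟩ := exists_concat_of_getLast? hRl
    have hwalk : IsWalkFrom G (A ++ (u :: R₁) ++ C) s t := by
      refine ⟨?_, ?_, ?_⟩
      · rw [List.append_assoc, List.Chain', List.isChain_append]
        refine ⟨hcA, ?_, ?_⟩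
        · rw [List.isChain_append]
          refine ⟨hRc, hcvC.tail, ?_⟩
          intro p hp q hq
          rw [hRl] at hp
          simp only [Option.mem_def, Option.some.injEq] at hp
          subst hp
          exact (List.isChain_cons.mp hcvC).1 q hq
        · intro p hp q hq
          simp only [List.cons_append, List.head?_cons, Option.mem_def, Option.some.injEq] at hq
          subst hq
          exact hjA p hp u (by simp)
      · rcases A with _ | ⟨a0, A'⟩ <;> simp_all
      · rw [hR₀]
        have e : A ++ (R₀ ++ [v]) ++ C = (A ++ R₀) ++ v :: C := by simp
        rw [e, List.getLast?_append]
        have e2 : A ++ u :: (B ++ v :: C) = (A ++ u :: B) ++ v :: C := by simp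
        rw [e2, List.getLast?_append] at hlast
        cases hC : (v :: C).getLast? with
        | none => simp at hC
        | some w =>
          rw [hC] at hlast
          simp only [Option.or_some, Option.or] at hlast ⊢
          exact hlast
    have hle := hmin _ hwalk
    have e1 : wlen ℓ (A ++ u :: (B ++ v :: C)) =
        wlen ℓ (A ++ [u]) + wlen ℓ (u :: (B ++ [v])) + wlen ℓ (v :: C) := by
      rw [wlen_append A u (B ++ v :: C)]
      have e : (u :: (B ++ v :: C)) = (u :: B) ++ v :: C := by simp
      rw [e, wlen_append (u :: B) v C]
      simp [add_assoc]
    have e2 : wlen ℓ (A ++ (u :: R₁) ++ C) =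
        wlen ℓ (A ++ [u]) + wlen ℓ (u :: R₁) + wlen ℓ (v :: C) := by
      have e : A ++ (u :: R₁) ++ C = A ++ u :: (R₁ ++ C) := by simp
      rw [e, wlen_append A u (R₁ ++ C)]
      have e' : (u :: (R₁ ++ C)) = R₀ ++ v :: C := by
        rw [← List.cons_append, hR₀]; simp
      rw [e', wlen_append R₀ v C, ← hR₀]
      ring
    rw [e1, e2] at hle
    linarith

lemma isWalkFrom_reverse {P : List V} {s t : V} (h : IsWalkFrom G P s t) :
    IsWalkFrom G P.reverse t s := by
  obtain ⟨hc, hh, hl⟩ := h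
  refine ⟨?_, ?_, ?_⟩
  · rw [List.Chain', List.isChain_reverse]
    exact hc.imp fun a b hab => hab.symm
  · rw [List.head?_reverse]; exact hl
  · rw [List.getLast?_reverse]; exact hh

lemma shortest_len_eq {P Q : List V} {u v : V} (hP : IsShortest G ℓ P u v)
    (hQ : IsShortest G ℓ Q u v) : wlen ℓ P = wlen ℓ Q :=
  le_antisymm (hP.2 Q hQ.1) (hQ.2 P hP.1)

lemma shortest_len_eq_rev (hsym : ∀ u v, ℓ u v = ℓ v u) {P Q : List V} {u v : V}
    (hP : IsShortest G ℓ P u v) (hQ : IsShortest G ℓ Q v u) : wlen ℓ P = wlen ℓ Q := by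
  have h1 : wlen ℓ P ≤ wlen ℓ Q := by
    have := hP.2 Q.reverse (isWalkFrom_reverse hQ.1)
    rwa [wlen_reverse hsym] at this
  have h2 : wlen ℓ Q ≤ wlen ℓ P := by
    have := hQ.2 P.reverse (isWalkFrom_reverse hP.1)
    rwa [wlen_reverse hsym] at this
  linarith

lemma shortest_no_repeat (hpos : ∀ u v, G.Adj u v → 0 < ℓ u v) {P : List V} {s t : V}
    (hP : IsShortest G ℓ P s t) (v : V) : ¬ Prec P v v := by
  rintro ⟨i, j, hij, hi, hj⟩
  obtain ⟨A, B, C, hdec⟩ := decomp2 hij hi hj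
  rw [hdec] at hP
  obtain ⟨⟨hchain, hhead, hlast⟩, hmin⟩ := hP
  rw [List.Chain', List.isChain_append] at hchain
  obtain ⟨hcA, hcM, hjA⟩ := hchain
  have hcM' : ((v :: B) ++ v :: C).Chain' G.Adj := by simpa [List.Chain'] using hcM
  rw [List.Chain', List.isChain_append] at hcM'
  obtain ⟨hcvB, hcvC, hjB⟩ := hcM'
  have hwalk : IsWalkFrom G (A ++ v :: C) s t := by
    refine ⟨?_, ?_, ?_⟩
    · rw [List.Chain', List.isChain_append]
      refine ⟨hcA, hcvC, ?_⟩
      intro p hp q hq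
      simp only [List.head?_cons, Option.mem_def, Option.some.injEq] at hq
      subst hq
      exact hjA p hp v (by simp)
    · rcases A with _ | ⟨a0, A'⟩ <;> simp_all
    · have e2 : A ++ v :: (B ++ v :: C) = (A ++ v :: B) ++ v :: C := by simp
      rw [e2, List.getLast?_append] at hlast
      rw [List.getLast?_append]
      cases hC : (v :: C).getLast? with
      | none => simp at hC
      | some w =>
        rw [hC] at hlast
        simp only [Option.or_some, Option.or] at hlast ⊢
        exact hlast
  have hle := hmin _ hwalk
  have e1 : wlen ℓ (A ++ v :: (B ++ v :: C)) =
      wlen ℓ (A ++ [v]) + wlen ℓ (v :: (B ++ [v])) + wlen ℓ (v :: C) := by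
    rw [wlen_append A v (B ++ v :: C)]
    have e : (v :: (B ++ v :: C)) = (v :: B) ++ v :: C := by simp
    rw [e, wlen_append (v :: B) v C]
    simp [add_assoc]
  have e2 : wlen ℓ (A ++ v :: C) = wlen ℓ (A ++ [v]) + wlen ℓ (v :: C) :=
    wlen_append A v C
  have hchainseg : (v :: (B ++ [v])).Chain' G.Adj := by
    have : (v :: (B ++ [v])) = (v :: B) ++ [v] := by simp
    rw [this, List.Chain', List.isChain_append]
    exact ⟨hcvB, List.isChain_singleton v, by simpa using hjB⟩
  have hposseg := wlen_pos' hpos hchainseg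
  rw [e1, e2] at hle
  linarith

lemma shortest_nodup (hpos : ∀ u v, G.Adj u v → 0 < ℓ u v) {P : List V} {s t : V}
    (hP : IsShortest G ℓ P s t) : P.Nodup := by
  rw [List.nodup_iff_injective_get]
  rintro ⟨i, hi⟩ ⟨j, hj⟩ heq
  simp only [List.get_eq_getElem] at heq
  by_contra hne
  simp only [Fin.mk.injEq] at hne
  rcases Nat.lt_or_gt_of_ne hne with hlt | hgt
  · exact shortest_no_repeat hpos hP P[i]
      ⟨i, j, hlt, List.getElem?_eq_getElem hi, by rw [List.getElem?_eq_getElem hj, heq]⟩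
  · exact shortest_no_repeat hpos hP P[i]
      ⟨j, i, hgt, by rw [List.getElem?_eq_getElem hj, heq], List.getElem?_eq_getElem hi⟩

lemma mem_of_prec_left {P : List V} {x y : V} (h : Prec P x y) : x ∈ P := by
  obtain ⟨i, j, _, hi, _⟩ := h; exact List.mem_of_getElem? hi

lemma mem_of_prec_right {P : List V} {x y : V} (h : Prec P x y) : y ∈ P := by
  obtain ⟨i, j, _, _, hj⟩ := h; exact List.mem_of_getElem? hj

lemma prec_of_indexOf_lt [DecidableEq V] {P : List V} {x y : V} (hx : x ∈ P) (hy : y ∈ P)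
    (h : P.idxOf x < P.idxOf y) : Prec P x y := by
  refine ⟨P.idxOf x, P.idxOf y, h, ?_, ?_⟩
  · rw [List.getElem?_eq_getElem (List.idxOf_lt_length_iff.mpr hx), List.getElem_idxOf]
  · rw [List.getElem?_eq_getElem (List.idxOf_lt_length_iff.mpr hy), List.getElem_idxOf]

lemma indexOf_lt_of_prec [DecidableEq V] {P : List V} (hnd : P.Nodup) {x y : V}
    (h : Prec P x y) : P.idxOf x < P.idxOf y := by
  obtain ⟨i, j, hij, hi, hj⟩ := h
  rw [List.getElem?_eq_some_iff] at hi hj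
  obtain ⟨hi', hix⟩ := hi
  obtain ⟨hj', hjy⟩ := hj
  have hx : x ∈ P := hix ▸ List.getElem_mem hi'
  have hy : y ∈ P := hjy ▸ List.getElem_mem hj'
  have hxl := List.idxOf_lt_length_iff.mpr hx
  have hyl := List.idxOf_lt_length_iff.mpr hy
  have e1 : P.idxOf x = i :=
    (hnd.getElem_inj_iff (hi := hxl) (hj := hi')).mp (by rw [List.getElem_idxOf, hix])
  have e2 : P.idxOf y = j :=
    (hnd.getElem_inj_iff (hi := hyl) (hj := hj')).mp (by rw [List.getElem_idxOf, hjy])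
  omega

lemma getElem?_indexOf [DecidableEq V] {P : List V} {x : V} (hx : x ∈ P) :
    P[P.idxOf x]? = some x := by
  rw [List.getElem?_eq_getElem (List.idxOf_lt_length_iff.mpr hx), List.getElem_idxOf]

lemma decomp3_of_prec [DecidableEq V] {L : List V} (hnd : L.Nodup) {x y z : V}
    (h1 : Prec L x y) (h2 : Prec L y z) :
    ∃ A B C D : List V, L = A ++ x :: (B ++ y :: (C ++ z :: D)) := by
  have hx := mem_of_prec_left h1
  have hy := mem_of_prec_right h1
  have hz := mem_of_prec_right h2
  exact decomp3 (indexOf_lt_of_prec hnd h1) (indexOf_lt_of_prec hnd h2)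
    (getElem?_indexOf hx) (getElem?_indexOf hy) (getElem?_indexOf hz)

lemma segs3 (hpos : ∀ u v, G.Adj u v → 0 < ℓ u v) {L : List V} {s t : V}
    (hS : IsShortest G ℓ L s t) {A B C D : List V} {x y z : V}
    (hdec : L = A ++ x :: (B ++ y :: (C ++ z :: D))) :
    ∃ S1 S2 S3 : List V, IsShortest G ℓ S1 x y ∧ IsShortest G ℓ S2 y z ∧
      IsShortest G ℓ S3 x z ∧ wlen ℓ S3 = wlen ℓ S1 + wlen ℓ S2 ∧
      0 < wlen ℓ S1 ∧ 0 < wlen ℓ S2 := by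
  rw [hdec] at hS
  have h1 : IsShortest G ℓ (x :: (B ++ [y])) x y := seg_shortest A x B y (C ++ z :: D) hS
  have hS2 : IsShortest G ℓ ((A ++ x :: B) ++ y :: (C ++ z :: D)) s t := by
    have e : A ++ x :: (B ++ y :: (C ++ z :: D)) = (A ++ x :: B) ++ y :: (C ++ z :: D) := by
      simp
    rwa [e] at hS
  have h2 : IsShortest G ℓ (y :: (C ++ [z])) y z := seg_shortest (A ++ x :: B) y C z D hS2
  have hS3 : IsShortest G ℓ (A ++ x :: ((B ++ y :: C) ++ z :: D)) s t := by
    have e : A ++ x :: (B ++ y :: (C ++ z :: D)) = A ++ x :: ((B ++ y :: C) ++ z :: D) := by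
      simp
    rwa [e] at hS
  have h3 : IsShortest G ℓ (x :: ((B ++ y :: C) ++ [z])) x z :=
    seg_shortest A x (B ++ y :: C) z D hS3
  refine ⟨x :: (B ++ [y]), y :: (C ++ [z]), x :: ((B ++ y :: C) ++ [z]), h1, h2, h3, ?_, ?_, ?_⟩
  · have e : (x :: ((B ++ y :: C) ++ [z])) = (x :: B) ++ y :: (C ++ [z]) := by simp
    rw [e, wlen_append (x :: B) y (C ++ [z])]
    simp
  · exact wlen_pos' hpos h1.1.1
  · exact wlen_pos' hpos h2.1.1

lemma no_both [DecidableEq V] (hℓ : PosLengths G ℓ) {P Q : List V} {a b c d : V}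
    (hP : IsShortest G ℓ P a b) (hQ : IsShortest G ℓ Q c d)
    (hJordan : ∀ x y, Prec P x y → Prec Q x y →
      ∃ z, (Prec Q z x ∧ Prec P y z) ∨ (Prec Q y z ∧ Prec P z x)) :
    ∀ x y, Prec P x y → Prec Q x y → False := by
  intro x y hPxy hQxy
  obtain ⟨z, hcase⟩ := hJordan x y hPxy hQxy
  have hndP := shortest_nodup hℓ.1 hP
  have hndQ := shortest_nodup hℓ.1 hQ
  rcases hcase with ⟨hQzx, hPyz⟩ | ⟨hQyz, hPzx⟩
  · -- P: x ≺ y ≺ z ; Q: z ≺ x ≺ y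
    obtain ⟨A, B, C, D, hdP⟩ := decomp3_of_prec hndP hPxy hPyz
    obtain ⟨A', B', C', D', hdQ⟩ := decomp3_of_prec hndQ hQzx hQxy
    obtain ⟨S1, S2, S3, hS1, hS2, hS3, hadd, hp1, hp2⟩ := segs3 hℓ.1 hP hdP
    obtain ⟨T1, T2, T3, hT1, hT2, hT3, hadd', hq1, hq2⟩ := segs3 hℓ.1 hQ hdQ
    -- S1 : x→y, S2 : y→z, S3 : x→z ; T1 : z→x, T2 : x→y, T3 : z→y
    have e1 : wlen ℓ S1 = wlen ℓ T2 := shortest_len_eq hS1 hT2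
    have e2 : wlen ℓ S3 = wlen ℓ T1 := shortest_len_eq_rev hℓ.2 hS3 hT1
    have e3 : wlen ℓ S2 = wlen ℓ T3 := shortest_len_eq_rev hℓ.2 hS2 hT3
    linarith
  · -- P: z ≺ x ≺ y ; Q: x ≺ y ≺ z
    obtain ⟨A, B, C, D, hdP⟩ := decomp3_of_prec hndP hPzx hPxy
    obtain ⟨A', B', C', D', hdQ⟩ := decomp3_of_prec hndQ hQxy hQyz
    obtain ⟨S1, S2, S3, hS1, hS2, hS3, hadd, hp1, hp2⟩ := segs3 hℓ.1 hP hdP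
    obtain ⟨T1, T2, T3, hT1, hT2, hT3, hadd', hq1, hq2⟩ := segs3 hℓ.1 hQ hdQ
    -- S1 : z→x, S2 : x→y, S3 : z→y ; T1 : x→y, T2 : y→z, T3 : x→z
    have e1 : wlen ℓ S2 = wlen ℓ T1 := shortest_len_eq hS2 hT1
    have e2 : wlen ℓ S1 = wlen ℓ T3 := shortest_len_eq_rev hℓ.2 hS1 hT3
    have e3 : wlen ℓ S3 = wlen ℓ T2 := shortest_len_eq_rev hℓ.2 hS3 hT2
    linarith

end Aux

/-- the crossing vertices x_1, …, x_h of two opposite non-conflicting shortest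
paths P (from a to b) and Q (from c to d) appear along Q in exactly the reverse of their
order along P.  Planarity enters through the Jordan curve theorem fact `hJordan` used in
the structural lemma for opposite non-conflicting shortest paths. -/
theorem stmt_19 [CircularOrder V] (G : SimpleGraph V) (ℓ : V → V → ℝ) (hℓ : PosLengths G ℓ)
    (P Q : List V) (a b c d : V)
    (hP : IsShortest G ℓ P a b) (hQ : IsShortest G ℓ Q c d)
    (hopp : CyclicOrder4 a b c d)
    (hnc : ¬ Conflict P Q)
    (hJordan : ∀ x y, Prec P x y → Prec Q x y →
      ∃ z, (Prec Q z x ∧ Prec P y z) ∨ (Prec Q y z ∧ Prec P z x))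
    (h : ℕ) (x : Fin h → V) (hinj : Function.Injective x)
    (hmem : ∀ i, x i ∈ P ∧ x i ∈ Q)
    (hord : ∀ i j : Fin h, i < j → Prec P (x i) (x j)) :
    ∀ i j : Fin h, i < j → Prec Q (x j) (x i) := by
  classical
  intro i j hij
  have hPij := hord i j hij
  have hne : x i ≠ x j := fun he => absurd (hinj he) hij.ne
  have hiQ : x i ∈ Q := (hmem i).2
  have hjQ : x j ∈ Q := (hmem j).2
  have hidx : Q.idxOf (x i) ≠ Q.idxOf (x j) := by
    intro he
    have g1 := getElem?_indexOf hiQ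
    rw [he, getElem?_indexOf hjQ] at g1
    exact hne (Option.some_injective _ g1.symm)
  rcases Nat.lt_or_gt_of_ne hidx with hlt | hgt
  · exact absurd (prec_of_indexOf_lt hiQ hjQ hlt)
      fun hc => no_both hℓ hP hQ hJordan _ _ hPij hc
  · exact prec_of_indexOf_lt hjQ hiQ hgt
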